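/- The third-column map π̃ : SU(3) → S⁵ is a locally trivial fiber bundle with fiber SU(2): every point x of the unit sphere S⁵ of ℂ³ has an open neighborhood over which π̃ admits a trivialization with fiber SU(2) (i.e., a fiberwise homeomorphism of π̃⁻¹ of that neighborhood with the product of the neighborhood and SU(2)). -/

import Mathlib

noncomputable section ThirdColumnAux

open Matrix Complex
attribute [local instance] Classical.propDecidable

private abbrev E3 := EuclideanSpace ℂ (Fin 3)
private abbrev Sph := Metric.sphere (0 : E3) 1

private def nf (b c : ℂ) : ℝ := Real.sqrt (Complex.normSq b + Complex.normSq c)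

private def tmat (a b c : ℂ) : Matrix (Fin 3) (Fin 3) ℂ :=
  !![(nf b c : ℂ), 0, a;
     -(starRingEnd ℂ a) * b / nf b c, (starRingEnd ℂ c) / nf b c, b;
     -(starRingEnd ℂ a) * c / nf b c, -(starRingEnd ℂ b) / nf b c, c]

private theorem tmat_mem (a b c : ℂ)
    (hv : Complex.normSq a + (Complex.normSq b + Complex.normSq c) = 1)
    (hn : nf b c ≠ 0) : tmat a b c ∈ Matrix.specialUnitaryGroup (Fin 3) ℂ := by
  have hsq : (nf b c)^2 = Complex.normSq b + Complex.normSq c :=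
    Real.sq_sqrt (add_nonneg (Complex.normSq_nonneg _) (Complex.normSq_nonneg _))
  have hn2 : ((nf b c : ℂ))^2 = starRingEnd ℂ b * b + starRingEnd ℂ c * c := by
    rw [← Complex.ofReal_pow, hsq, Complex.ofReal_add, Complex.normSq_eq_conj_mul_self,
      Complex.normSq_eq_conj_mul_self]
  have h1 : starRingEnd ℂ a * a + ((nf b c : ℂ))^2 = 1 := by
    rw [hn2, ← Complex.normSq_eq_conj_mul_self, ← Complex.normSq_eq_conj_mul_self,
      ← Complex.normSq_eq_conj_mul_self, ← Complex.ofReal_add, ← Complex.ofReal_add, hv,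
      Complex.ofReal_one]
  have hnC : ((nf b c : ℂ)) ≠ 0 := by exact_mod_cast hn
  rw [Matrix.mem_specialUnitaryGroup_iff]
  constructor
  · rw [Matrix.mem_unitaryGroup_iff']
    ext i j
    fin_cases i <;> fin_cases j
    all_goals
      try simp [Matrix.mul_apply, Fin.sum_univ_three, tmat, Matrix.one_apply, star_div₀,
        Matrix.conjTranspose_apply]
    all_goals try field_simp
    any_goals ring
    any_goals linear_combination -hn2
    any_goals linear_combination h1 - hn2
    any_goals linear_combination a * hn2
    any_goals linear_combination (starRingEnd ℂ a) * hn2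
    any_goals linear_combination (-(a * starRingEnd ℂ a)) * hn2 + ((nf b c : ℂ))^2 * h1
  · rw [Matrix.det_fin_three]
    simp only [tmat, Matrix.of_apply, Matrix.cons_val, Matrix.cons_val_zero, Matrix.cons_val_one]
    field_simp
    linear_combination (-(((nf b c : ℂ))^2 + a * starRingEnd ℂ a)) * hn2
      + ((nf b c : ℂ))^2 * h1

private def iota (B : Matrix (Fin 2) (Fin 2) ℂ) : Matrix (Fin 3) (Fin 3) ℂ :=
  !![B 0 0, B 0 1, 0; B 1 0, B 1 1, 0; 0, 0, 1]

private def blk (M : Matrix (Fin 3) (Fin 3) ℂ) : Matrix (Fin 2) (Fin 2) ℂ :=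
  !![M 0 0, M 0 1; M 1 0, M 1 1]

private theorem iota_mem (B : Matrix (Fin 2) (Fin 2) ℂ)
    (hB : B ∈ Matrix.specialUnitaryGroup (Fin 2) ℂ) :
    iota B ∈ Matrix.specialUnitaryGroup (Fin 3) ℂ := by
  rw [Matrix.mem_specialUnitaryGroup_iff] at hB ⊢
  obtain ⟨hU, hd⟩ := hB
  rw [Matrix.mem_unitaryGroup_iff'] at hU
  constructor
  · rw [Matrix.mem_unitaryGroup_iff']
    ext i j
    have e : ∀ i j : Fin 2, (star B * B) i j = (1 : Matrix (Fin 2) (Fin 2) ℂ) i j := fun i j => by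
      rw [hU]
    have e00 := e 0 0; have e01 := e 0 1; have e10 := e 1 0; have e11 := e 1 1
    simp [Matrix.mul_apply, Fin.sum_univ_two, Matrix.one_apply, Matrix.conjTranspose_apply]
      at e00 e01 e10 e11
    fin_cases i <;> fin_cases j <;>
      simp [iota, Matrix.mul_apply, Fin.sum_univ_three, Matrix.one_apply,
        Matrix.conjTranspose_apply, e00, e01, e10, e11]
  · rw [Matrix.det_fin_three]
    rw [Matrix.det_fin_two] at hd
    simp [iota]
    linear_combination hd

private theorem blk_iota (B : Matrix (Fin 2) (Fin 2) ℂ) : blk (iota B) = B := by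
  ext i j
  fin_cases i <;> fin_cases j <;> simp [iota, blk]

private theorem blk_lemma (M : Matrix (Fin 3) (Fin 3) ℂ)
    (hM : M ∈ Matrix.specialUnitaryGroup (Fin 3) ℂ)
    (h02 : M 0 2 = 0) (h12 : M 1 2 = 0) (h22 : M 2 2 = 1) :
    blk M ∈ Matrix.specialUnitaryGroup (Fin 2) ℂ ∧ M = iota (blk M) := by
  rw [Matrix.mem_specialUnitaryGroup_iff] at hM
  obtain ⟨hU, hd⟩ := hM
  have h5 : M * star M = 1 := Matrix.mem_unitaryGroup_iff.1 hU
  have h5' : star M * M = 1 := Matrix.mem_unitaryGroup_iff'.1 hU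
  have e22 : (M * star M) 2 2 = (1 : Matrix (Fin 3) (Fin 3) ℂ) 2 2 := by rw [h5]
  simp [Matrix.mul_apply, Fin.sum_univ_three, Matrix.conjTranspose_apply, Matrix.one_apply,
    h22, Complex.mul_conj] at e22
  have hnn : Complex.normSq (M 2 0) + Complex.normSq (M 2 1) = 0 := by
    have h' : ((Complex.normSq (M 2 0) + Complex.normSq (M 2 1) : ℝ) : ℂ) = 0 := by
      push_cast
      linear_combination e22
    exact_mod_cast h'
  have h20 : M 2 0 = 0 := by
    have := (add_eq_zero_iff_of_nonneg (Complex.normSq_nonneg _) (Complex.normSq_nonneg _)).1 hnn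
    exact Complex.normSq_eq_zero.1 this.1
  have h21 : M 2 1 = 0 := by
    have := (add_eq_zero_iff_of_nonneg (Complex.normSq_nonneg _) (Complex.normSq_nonneg _)).1 hnn
    exact Complex.normSq_eq_zero.1 this.2
  have e : ∀ i j : Fin 3, (star M * M) i j = (1 : Matrix (Fin 3) (Fin 3) ℂ) i j := fun i j => by
    rw [h5']
  have e00 := e 0 0; have e01 := e 0 1; have e10 := e 1 0; have e11 := e 1 1
  simp [Matrix.mul_apply, Fin.sum_univ_three, Matrix.one_apply, Matrix.conjTranspose_apply,
    h20, h21] at e00 e01 e10 e11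
  constructor
  · rw [Matrix.mem_specialUnitaryGroup_iff]
    constructor
    · rw [Matrix.mem_unitaryGroup_iff']
      ext i j
      fin_cases i <;> fin_cases j <;>
        simp [blk, Matrix.mul_apply, Fin.sum_univ_two, Matrix.one_apply,
          Matrix.conjTranspose_apply, e00, e01, e10, e11]
    · rw [Matrix.det_fin_two]
      rw [Matrix.det_fin_three] at hd
      simp [blk, h02, h12, h22, h20, h21] at hd ⊢
      linear_combination hd
  · ext i j
    fin_cases i <;> fin_cases j <;>
      simp [iota, blk, h02, h12, h22, h20, h21]

private theorem star_mem_su3 (A : Matrix (Fin 3) (Fin 3) ℂ)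
    (h : A ∈ Matrix.specialUnitaryGroup (Fin 3) ℂ) :
    star A ∈ Matrix.specialUnitaryGroup (Fin 3) ℂ := by
  rw [Matrix.mem_specialUnitaryGroup_iff] at h ⊢
  refine ⟨Unitary.star_mem h.1, ?_⟩
  rw [Matrix.star_eq_conjTranspose, Matrix.det_conjTranspose, h.2]
  simp

/-- coordinate vector `(star P) *ᵥ y` -/
private def wv (P : Matrix (Fin 3) (Fin 3) ℂ) (y : Sph) : Fin 3 → ℂ :=
  star P *ᵥ (y : E3)

/-- the local section -/
private def smat (P : Matrix (Fin 3) (Fin 3) ℂ) (y : Sph) : Matrix (Fin 3) (Fin 3) ℂ :=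
  P * tmat (wv P y 0) (wv P y 1) (wv P y 2)

private theorem sphere_normSq (y : Sph) :
    Complex.normSq ((y:E3) 0) + (Complex.normSq ((y:E3) 1) + Complex.normSq ((y:E3) 2)) = 1 := by
  have hy : ‖(y : E3)‖ = 1 := by simpa using mem_sphere_zero_iff_norm.mp y.2
  have h2 : ∑ i : Fin 3, ‖(y:E3) i‖^2 = 1 := by
    have h := EuclideanSpace.norm_eq (y : E3)
    rw [hy] at h
    have := congrArg (fun t : ℝ => t^2) h
    simp only [one_pow] at this
    rw [Real.sq_sqrt (Finset.sum_nonneg fun i _ => sq_nonneg _)] at this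
    linarith
  rw [Fin.sum_univ_three] at h2
  simp only [← Complex.normSq_eq_norm_sq] at h2
  linarith

private theorem wv_normSq (P : Matrix (Fin 3) (Fin 3) ℂ)
    (hP : P ∈ Matrix.specialUnitaryGroup (Fin 3) ℂ) (y : Sph) :
    Complex.normSq (wv P y 0) + (Complex.normSq (wv P y 1) + Complex.normSq (wv P y 2)) = 1 := by
  have hPU : P * star P = 1 := Matrix.mem_unitaryGroup_iff.1 (Matrix.mem_specialUnitaryGroup_iff.1 hP).1
  have expand : ∀ u : Fin 3 → ℂ,
      star u ⬝ᵥ u = (↑(Complex.normSq (u 0)) + (↑(Complex.normSq (u 1)) + ↑(Complex.normSq (u 2))) : ℂ) := by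
    intro u
    simp [dotProduct, Fin.sum_univ_three, Complex.normSq_eq_conj_mul_self]
    ring
  have key : star (wv P y) ⬝ᵥ (wv P y) = star ((y : E3) : Fin 3 → ℂ) ⬝ᵥ ((y : E3) : Fin 3 → ℂ) := by
    rw [wv, Matrix.star_mulVec, Matrix.star_eq_conjTranspose, Matrix.conjTranspose_conjTranspose,
      ← Matrix.dotProduct_mulVec, Matrix.mulVec_mulVec]
    rw [show P * Pᴴ = 1 from hPU, Matrix.one_mulVec]
  rw [expand, expand] at key
  have := sphere_normSq y
  have h' : ((Complex.normSq (wv P y 0) + (Complex.normSq (wv P y 1) + Complex.normSq (wv P y 2)) : ℝ) : ℂ)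
      = ((1 : ℝ) : ℂ) := by
    push_cast
    rw [key, ← Complex.ofReal_one, ← this]
    push_cast
    ring
  exact_mod_cast h'

private theorem wv_cont (P : Matrix (Fin 3) (Fin 3) ℂ) (k : Fin 3) :
    Continuous fun y : Sph => wv P y k := by
  have : (fun y : Sph => wv P y k) = fun y : Sph => ∑ j, star P k j * (y : E3) j := rfl
  rw [this]
  exact continuous_finset_sum _ fun j _ =>
    continuous_const.mul ((continuous_apply j).comp ((PiLp.continuous_ofLp 2 _).comp continuous_subtype_val))

private theorem nf_pos (P : Matrix (Fin 3) (Fin 3) ℂ)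
    (hP : P ∈ Matrix.specialUnitaryGroup (Fin 3) ℂ) (y : Sph)
    (hy : Complex.normSq (wv P y 0) < 1) : 0 < nf (wv P y 1) (wv P y 2) := by
  have := wv_normSq P hP y
  exact Real.sqrt_pos.2 (by linarith)

private theorem tmat_col2 (a b c : ℂ) (k : Fin 3) : tmat a b c k 2 = ![a, b, c] k := by
  fin_cases k <;> simp [tmat]

private theorem smat_mem (P : Matrix (Fin 3) (Fin 3) ℂ)
    (hP : P ∈ Matrix.specialUnitaryGroup (Fin 3) ℂ) (y : Sph)
    (hy : Complex.normSq (wv P y 0) < 1) :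
    smat P y ∈ Matrix.specialUnitaryGroup (Fin 3) ℂ :=
  mul_mem hP (tmat_mem _ _ _ (wv_normSq P hP y) (ne_of_gt (nf_pos P hP y hy)))

private theorem smat_col2 (P : Matrix (Fin 3) (Fin 3) ℂ)
    (hP : P ∈ Matrix.specialUnitaryGroup (Fin 3) ℂ) (y : Sph) (i : Fin 3) :
    smat P y i 2 = (y : E3) i := by
  have hPU : P * star P = 1 :=
    Matrix.mem_unitaryGroup_iff.1 (Matrix.mem_specialUnitaryGroup_iff.1 hP).1
  have h1 : smat P y i 2 = (P *ᵥ wv P y) i := by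
    rw [smat, Matrix.mul_apply]
    simp only [tmat_col2]
    simp [Matrix.mulVec, dotProduct, Fin.sum_univ_three]
  rw [h1, wv, Matrix.mulVec_mulVec]
  rw [show P * star P = 1 from hPU, Matrix.one_mulVec]

-- ContinuousOn for entries of tmat over the good set
private theorem tmat_cont (P : Matrix (Fin 3) (Fin 3) ℂ)
    (hP : P ∈ Matrix.specialUnitaryGroup (Fin 3) ℂ) (i j : Fin 3) :
    ContinuousOn (fun y : Sph => tmat (wv P y 0) (wv P y 1) (wv P y 2) i j)
      {y : Sph | Complex.normSq (wv P y 0) < 1} := by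
  have cnf : Continuous fun y : Sph => ((nf (wv P y 1) (wv P y 2) : ℝ) : ℂ) := by
    refine Complex.continuous_ofReal.comp ?_
    exact Real.continuous_sqrt.comp
      ((Complex.continuous_normSq.comp (wv_cont P 1)).add
        (Complex.continuous_normSq.comp (wv_cont P 2)))
  have hnz : ∀ y ∈ {y : Sph | Complex.normSq (wv P y 0) < 1},
      ((nf (wv P y 1) (wv P y 2) : ℝ) : ℂ) ≠ 0 := fun y hy => by
    exact_mod_cast ne_of_gt (nf_pos P hP y hy)
  have cstar : ∀ k : Fin 3, Continuous fun y : Sph => starRingEnd ℂ (wv P y k) := fun k =>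
    continuous_conj.comp (wv_cont P k)
  fin_cases i <;> fin_cases j
  · exact cnf.continuousOn
  · exact continuousOn_const
  · exact (wv_cont P 0).continuousOn
  · exact (((cstar 0).neg.mul (wv_cont P 1)).continuousOn.div cnf.continuousOn hnz)
  · exact ((cstar 2).continuousOn.div cnf.continuousOn hnz)
  · exact (wv_cont P 1).continuousOn
  · exact (((cstar 0).neg.mul (wv_cont P 2)).continuousOn.div cnf.continuousOn hnz)
  · exact ((cstar 1).neg.continuousOn.div cnf.continuousOn hnz)
  · exact (wv_cont P 2).continuousOn

private def Uset (P : Matrix (Fin 3) (Fin 3) ℂ) : Set Sph :=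
  {y : Sph | Complex.normSq (wv P y 0) < 1}

private theorem Uset_open (P : Matrix (Fin 3) (Fin 3) ℂ) : IsOpen (Uset P) :=
  isOpen_lt (Complex.continuous_normSq.comp (wv_cont P 0)) continuous_const

private theorem smat_cont (P : Matrix (Fin 3) (Fin 3) ℂ)
    (hP : P ∈ Matrix.specialUnitaryGroup (Fin 3) ℂ) :
    ContinuousOn (fun y : Sph => smat P y) (Uset P) := by
  apply continuousOn_pi.2; intro i; apply continuousOn_pi.2; intro j
  have h : (fun y : Sph => smat P y i j)
      = fun y => ∑ k, P i k * tmat (wv P y 0) (wv P y 1) (wv P y 2) k j := by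
    funext y; rw [smat, Matrix.mul_apply]
  have : ContinuousOn (fun y : Sph => ∑ k, P i k * tmat (wv P y 0) (wv P y 1) (wv P y 2) k j)
      (Uset P) := by
    exact continuousOn_finset_sum _ fun k _ => continuousOn_const.mul (tmat_cont P hP k j)
  exact h ▸ this

private theorem proj_cont (proj : ↥(Matrix.specialUnitaryGroup (Fin 3) ℂ) → ↥Sph)
    (hproj : ∀ A : Matrix.specialUnitaryGroup (Fin 3) ℂ, ∀ i : Fin 3,
      ((proj A : E3) i) = (A : Matrix (Fin 3) (Fin 3) ℂ) i 2) :
    Continuous proj := by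
  rw [Topology.IsEmbedding.subtypeVal.continuous_iff]
  have h : (Subtype.val ∘ proj)
      = fun A : ↥(Matrix.specialUnitaryGroup (Fin 3) ℂ) =>
        (show E3 from WithLp.toLp 2 fun i => (A : Matrix (Fin 3) (Fin 3) ℂ) i 2) :=
    funext fun A => PiLp.ext fun i => hproj A i
  rw [h]
  exact (PiLp.continuous_toLp 2 _).comp (continuous_pi fun i =>
    (continuous_apply 2).comp ((continuous_apply i).comp continuous_subtype_val))

private theorem blk_cont : Continuous blk := by
  apply continuous_matrix
  intro i j
  fin_cases i <;> fin_cases j <;> simp only [blk] <;>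
    first
    | exact (continuous_apply (0 : Fin 3)).comp (continuous_apply (0 : Fin 3))
    | exact (continuous_apply (1 : Fin 3)).comp (continuous_apply (0 : Fin 3))
    | exact (continuous_apply (0 : Fin 3)).comp (continuous_apply (1 : Fin 3))
    | exact (continuous_apply (1 : Fin 3)).comp (continuous_apply (1 : Fin 3))
    | (simp [Matrix.cons_val_zero, Matrix.cons_val_one];
       exact (continuous_apply _).comp (continuous_apply _))

private theorem iota_cont : Continuous iota := by
  apply continuous_matrix
  intro i j
  fin_cases i <;> fin_cases j <;> simp only [iota] <;>
    first
    | exact continuous_const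
    | exact (continuous_apply (0 : Fin 2)).comp (continuous_apply (0 : Fin 2))
    | exact (continuous_apply (1 : Fin 2)).comp (continuous_apply (0 : Fin 2))
    | exact (continuous_apply (0 : Fin 2)).comp (continuous_apply (1 : Fin 2))
    | exact (continuous_apply (1 : Fin 2)).comp (continuous_apply (1 : Fin 2))
    | (simp [Matrix.cons_val_zero, Matrix.cons_val_one];
       first
       | exact continuous_const
       | exact (continuous_apply _).comp (continuous_apply _))

variable (proj : Matrix.specialUnitaryGroup (Fin 3) ℂ → Metric.sphere (0 : EuclideanSpace ℂ (Fin 3)) 1)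
  (hproj : ∀ A : Matrix.specialUnitaryGroup (Fin 3) ℂ, ∀ i : Fin 3,
      ((proj A : EuclideanSpace ℂ (Fin 3)) i) = (A : Matrix (Fin 3) (Fin 3) ℂ) i 2)
  (P : Matrix (Fin 3) (Fin 3) ℂ) (hP : P ∈ Matrix.specialUnitaryGroup (Fin 3) ℂ)

set_option maxHeartbeats 1000000

include hproj hP in
private theorem key (A : Matrix.specialUnitaryGroup (Fin 3) ℂ) (h : proj A ∈ Uset P) :
    blk (star (smat P (proj A)) * (A : Matrix (Fin 3) (Fin 3) ℂ)) ∈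
        Matrix.specialUnitaryGroup (Fin 2) ℂ ∧
      star (smat P (proj A)) * (A : Matrix (Fin 3) (Fin 3) ℂ) =
        iota (blk (star (smat P (proj A)) * (A : Matrix (Fin 3) (Fin 3) ℂ))) := by
  have hsm := smat_mem P hP (proj A) h
  have hss : star (smat P (proj A)) * smat P (proj A) = 1 :=
    Matrix.mem_unitaryGroup_iff'.1 (Matrix.mem_specialUnitaryGroup_iff.1 hsm).1
  have hAc : ∀ k : Fin 3, (A : Matrix (Fin 3) (Fin 3) ℂ) k 2 = smat P (proj A) k 2 := fun k => by
    rw [smat_col2 P hP, ← hproj]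
  have hM3 : ∀ i : Fin 3, (star (smat P (proj A)) * (A : Matrix (Fin 3) (Fin 3) ℂ)) i 2
      = (1 : Matrix (Fin 3) (Fin 3) ℂ) i 2 := by
    intro i
    rw [Matrix.mul_apply, Finset.sum_congr rfl fun k _ => by rw [hAc k], ← Matrix.mul_apply, hss]
  exact blk_lemma _ (mul_mem (star_mem_su3 _ hsm) A.2)
    ((hM3 0).trans (by simp [Matrix.one_apply]))
    ((hM3 1).trans (by simp [Matrix.one_apply]))
    ((hM3 2).trans (by simp [Matrix.one_apply]))

private def trivTo : Matrix.specialUnitaryGroup (Fin 3) ℂ →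
    Sph × Matrix.specialUnitaryGroup (Fin 2) ℂ := fun A =>
  (proj A, if h : proj A ∈ Uset P then
    ⟨blk (star (smat P (proj A)) * (A : Matrix (Fin 3) (Fin 3) ℂ)), (key proj hproj P hP A h).1⟩
   else 1)

private def trivInv : Sph × Matrix.specialUnitaryGroup (Fin 2) ℂ →
    Matrix.specialUnitaryGroup (Fin 3) ℂ := fun p =>
  if h : p.1 ∈ Uset P then
    ⟨smat P p.1 * iota (p.2 : Matrix (Fin 2) (Fin 2) ℂ),
      mul_mem (smat_mem P hP p.1 h) (iota_mem _ p.2.2)⟩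
  else 1

include hP in
private theorem trivInv_val (p : Sph × Matrix.specialUnitaryGroup (Fin 2) ℂ)
    (h : p.1 ∈ Uset P) :
    ((trivInv P hP p : Matrix.specialUnitaryGroup (Fin 3) ℂ) : Matrix (Fin 3) (Fin 3) ℂ)
      = smat P p.1 * iota (p.2 : Matrix (Fin 2) (Fin 2) ℂ) := by
  unfold trivInv
  rw [dif_pos h]

include hproj hP in
private theorem trivInv_proj (p : Sph × Matrix.specialUnitaryGroup (Fin 2) ℂ)
    (h : p.1 ∈ Uset P) : proj (trivInv P hP p) = p.1 := by
  apply Subtype.ext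
  ext i
  rw [hproj, trivInv_val P hP p h]
  have h2 : (smat P p.1 * iota (p.2 : Matrix (Fin 2) (Fin 2) ℂ)) i 2 = smat P p.1 i 2 := by
    rw [Matrix.mul_apply, Fin.sum_univ_three]
    simp [iota]
  rw [h2, smat_col2 P hP]


include hproj hP in
private theorem triv_left (A : Matrix.specialUnitaryGroup (Fin 3) ℂ) (h : proj A ∈ Uset P) :
    trivInv P hP (trivTo proj hproj P hP A) = A := by
  have hsmul : smat P (proj A) * star (smat P (proj A)) = 1 :=
    Matrix.mem_unitaryGroup_iff.1 (Matrix.mem_specialUnitaryGroup_iff.1 (smat_mem P hP _ h)).1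
  apply Subtype.ext
  rw [trivInv_val P hP _ (show (trivTo proj hproj P hP A).1 ∈ Uset P from h)]
  have h2 : (((trivTo proj hproj P hP A).2 : Matrix (Fin 2) (Fin 2) ℂ))
      = blk (star (smat P (proj A)) * (A : Matrix (Fin 3) (Fin 3) ℂ)) := by
    unfold trivTo
    rw [dif_pos h]
  have h1 : (trivTo proj hproj P hP A).1 = proj A := rfl
  rw [h1, h2, ← (key proj hproj P hP A h).2, ← mul_assoc, hsmul, one_mul]

include hproj hP in
private theorem triv_right (p : Sph × Matrix.specialUnitaryGroup (Fin 2) ℂ)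
    (h : p.1 ∈ Uset P) : trivTo proj hproj P hP (trivInv P hP p) = p := by
  have hpr := trivInv_proj proj hproj P hP p h
  have h' : proj (trivInv P hP p) ∈ Uset P := by rw [hpr]; exact h
  have hss : star (smat P p.1) * smat P p.1 = 1 :=
    Matrix.mem_unitaryGroup_iff'.1 (Matrix.mem_specialUnitaryGroup_iff.1 (smat_mem P hP _ h)).1
  refine Prod.ext hpr ?_
  apply Subtype.ext
  have h2 : ((trivTo proj hproj P hP (trivInv P hP p)).2 : Matrix (Fin 2) (Fin 2) ℂ)
      = blk (star (smat P (proj (trivInv P hP p)))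
          * ((trivInv P hP p : Matrix.specialUnitaryGroup (Fin 3) ℂ) : Matrix (Fin 3) (Fin 3) ℂ)) := by
    unfold trivTo
    rw [dif_pos h']
  rw [h2, hpr, trivInv_val P hP p h, ← mul_assoc, hss, one_mul, blk_iota]

include hproj hP in
private theorem triv_to_cont : ContinuousOn (trivTo proj hproj P hP) (proj ⁻¹' Uset P) := by
  unfold trivTo
  apply ContinuousOn.prodMk
  · exact (proj_cont proj hproj).continuousOn
  · rw [Topology.IsEmbedding.subtypeVal.continuousOn_iff]
    have c1 : ContinuousOn (fun A : Matrix.specialUnitaryGroup (Fin 3) ℂ => smat P (proj A))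
        (proj ⁻¹' Uset P) :=
      (smat_cont P hP).comp (proj_cont proj hproj).continuousOn (fun A hA => hA)
    have c3 : ContinuousOn (fun A : Matrix.specialUnitaryGroup (Fin 3) ℂ =>
        star (smat P (proj A)) * (A : Matrix (Fin 3) (Fin 3) ℂ)) (proj ⁻¹' Uset P) :=
      c1.star.mul continuous_subtype_val.continuousOn
    refine ContinuousOn.congr (blk_cont.comp_continuousOn c3) ?_
    intro A hA
    simp only [Function.comp]
    rw [dif_pos (show proj A ∈ Uset P from hA)]

include hP in
private theorem triv_inv_cont : ContinuousOn (trivInv P hP) (Uset P ×ˢ Set.univ) := by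
  rw [Topology.IsEmbedding.subtypeVal.continuousOn_iff]
  have c1 : ContinuousOn (fun p : Sph × Matrix.specialUnitaryGroup (Fin 2) ℂ => smat P p.1)
      (Uset P ×ˢ Set.univ) :=
    (smat_cont P hP).comp continuous_fst.continuousOn (fun p hp => hp.1)
  have c2 : Continuous fun p : Sph × Matrix.specialUnitaryGroup (Fin 2) ℂ =>
      iota ((p.2 : Matrix.specialUnitaryGroup (Fin 2) ℂ) : Matrix (Fin 2) (Fin 2) ℂ) :=
    iota_cont.comp (continuous_subtype_val.comp continuous_snd)
  refine ContinuousOn.congr (c1.mul c2.continuousOn) ?_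
  intro p hp
  simp only [Function.comp]
  unfold trivInv
  rw [dif_pos hp.1]
  rfl

private def trivOf : Bundle.Trivialization (Matrix.specialUnitaryGroup (Fin 2) ℂ) proj where
  toFun := trivTo proj hproj P hP
  invFun := trivInv P hP
  source := proj ⁻¹' Uset P
  target := Uset P ×ˢ Set.univ
  map_source' := fun A h => ⟨h, trivial⟩
  map_target' := fun p hp => by
    show proj (trivInv P hP p) ∈ Uset P
    rw [trivInv_proj proj hproj P hP p hp.1]
    exact hp.1
  left_inv' := fun A h => triv_left proj hproj P hP A h
  right_inv' := fun p hp => triv_right proj hproj P hP p hp.1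
  open_source := (Uset_open P).preimage (proj_cont proj hproj)
  open_target := (Uset_open P).prod isOpen_univ
  continuousOn_toFun := triv_to_cont proj hproj P hP
  continuousOn_invFun := triv_inv_cont P hP
  baseSet := Uset P
  open_baseSet := Uset_open P
  source_eq := rfl
  target_eq := rfl
  proj_toFun := fun A _ => rfl

private def pswap : Matrix (Fin 3) (Fin 3) ℂ := !![0,-1,0;1,0,0;0,0,1]

private theorem pswap_mem : pswap ∈ Matrix.specialUnitaryGroup (Fin 3) ℂ := by
  rw [Matrix.mem_specialUnitaryGroup_iff]
  constructor
  · rw [Matrix.mem_unitaryGroup_iff']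
    ext i j
    fin_cases i <;> fin_cases j <;>
      simp [pswap, Matrix.mul_apply, Fin.sum_univ_three, Matrix.one_apply,
        Matrix.conjTranspose_apply, Matrix.vecHead, Matrix.vecTail]
  · rw [Matrix.det_fin_three]
    simp [pswap]

end ThirdColumnAux

/-- The third-column projection `π̃ : SU(3) → S⁵` is a locally trivial fiber bundle with fiber
`SU(2)`: every point of the sphere lies in the base set of some trivialization with fiber
`SU(2)`. -/
theorem third_column_is_fiber_bundle
    (proj : Matrix.specialUnitaryGroup (Fin 3) ℂ →
      Metric.sphere (0 : EuclideanSpace ℂ (Fin 3)) 1)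
    (hproj : ∀ A : Matrix.specialUnitaryGroup (Fin 3) ℂ, ∀ i : Fin 3,
      ((proj A : EuclideanSpace ℂ (Fin 3)) i) = (A : Matrix (Fin 3) (Fin 3) ℂ) i 2)
    (x : Metric.sphere (0 : EuclideanSpace ℂ (Fin 3)) 1) :
    ∃ e : Bundle.Trivialization (Matrix.specialUnitaryGroup (Fin 2) ℂ) proj, x ∈ e.baseSet := by
  by_cases h0 : Complex.normSq ((x : EuclideanSpace ℂ (Fin 3)) 0) < 1
  · refine ⟨trivOf proj hproj 1 (one_mem _), ?_⟩
    show Complex.normSq (wv 1 x 0) < 1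
    have h : wv 1 x 0 = (x : EuclideanSpace ℂ (Fin 3)) 0 := by
      rw [wv, star_one, Matrix.one_mulVec]
    rwa [h]
  · refine ⟨trivOf proj hproj pswap pswap_mem, ?_⟩
    show Complex.normSq (wv pswap x 0) < 1
    have h1 : wv pswap x 0 = (x : EuclideanSpace ℂ (Fin 3)) 1 := by
      rw [wv]
      show Matrix.mulVec (star pswap) ((x : EuclideanSpace ℂ (Fin 3)) : Fin 3 → ℂ) 0 = _
      simp [pswap, Matrix.mulVec, dotProduct, Fin.sum_univ_three,
        Matrix.conjTranspose_apply]
    rw [h1]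
    have hs := sphere_normSq x
    have h2 := Complex.normSq_nonneg ((x : EuclideanSpace ℂ (Fin 3)) 2)
    have h3 := not_lt.1 h0
    linarith
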